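/- For commuting real numbers (scalar case of commuting operators) a, b and t > 0, and any k ≥ 1, the identity φ_k(t(a+b)) - k! φ_k(ta) φ_k(tb) = (k/(k-1)!) ∫₀¹∫₀¹∫_η^ξ t²(1-η) a e^{t(1-σ)a} b φ₁(t(1-η)b) (ηξ)^{k-1} dσ dη dξ holds, where the inner integral is a signed integral from η to ξ. -/
import Mathlib


open scoped Nat

/-- `φ_0(z) = e^z` and `φ_k(z) = ∫₀¹ e^{(1-ξ)z} ξ^{k-1}/(k-1)! dξ` for `k ≥ 1`. -/
noncomputable def phiR (k : ℕ) (z : ℝ) : ℝ :=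
  if k = 0 then Real.exp z
  else ∫ ξ in (0:ℝ)..1, Real.exp ((1 - ξ) * z) * ξ ^ (k - 1) / ((k-1)! : ℝ)

private lemma aux1 (d x y : ℝ) :
    d * (∫ σ in x..y, Real.exp (d - σ * d)) =
      Real.exp (d - x * d) - Real.exp (d - y * d) := by
  rcases eq_or_ne d 0 with rfl | hd
  · simp
  · have h := intervalIntegral.integral_comp_mul_add (a:=x) (b:=y) Real.exp
      (neg_ne_zero.mpr hd) d
    have harg : ∀ σ : ℝ, d - σ * d = -d * σ + d := fun σ => by ring
    simp only [harg]
    rw [h, integral_exp, smul_eq_mul]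
    linear_combination (Real.exp (-d * x + d) - Real.exp (-d * y + d)) *
      mul_inv_cancel₀ (neg_ne_zero.mpr hd)

private lemma aux2 (z : ℝ) : z * phiR 1 z = Real.exp z - 1 := by
  have h : phiR 1 z = ∫ ξ in (0:ℝ)..1, Real.exp (z - ξ * z) := by
    simp only [phiR, if_neg one_ne_zero]
    apply intervalIntegral.integral_congr
    intro ξ _
    simp [Nat.factorial]
    ring_nf
  rw [h]
  have := aux1 z 0 1
  simpa using this

theorem phi_splitting_identity (k : ℕ) (hk : 1 ≤ k) (a b t : ℝ) (ht : 0 < t) :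
    phiR k (t * (a + b)) - (k ! : ℝ) * phiR k (t * a) * phiR k (t * b) =
      ((k : ℝ) / ((k-1)! : ℝ)) *
        ∫ ξ in (0:ℝ)..1, ∫ η in (0:ℝ)..1, ∫ σ in η..ξ,
          t ^ 2 * (1 - η) * a * Real.exp (t * (1 - σ) * a) * b *
            phiR 1 (t * (1 - η) * b) * (η * ξ) ^ (k - 1) := by
  obtain ⟨m, rfl⟩ : ∃ m, k = m + 1 := ⟨k - 1, (Nat.succ_pred_eq_of_pos hk).symm⟩
  simp only [Nat.add_sub_cancel]
  -- the basic single-variable integral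
  set A : ℝ → ℝ := fun c => ∫ x in (0:ℝ)..1, Real.exp (t * (1 - x) * c) * x ^ m with hA
  have hphiA : ∀ c : ℝ, phiR (m + 1) (t * c) = A c / (m ! : ℝ) := by
    intro c
    simp only [phiR, if_neg (Nat.succ_ne_zero m), Nat.add_sub_cancel, hA]
    rw [intervalIntegral.integral_congr
        (g := fun x : ℝ => Real.exp (t * (1 - x) * c) * x ^ m / (m ! : ℝ))
        (fun x _ => by rw [show (1 - x) * (t * c) = t * (1 - x) * c from by ring]),
      intervalIntegral.integral_div]
  -- continuity / integrability helpers
  have hcont : ∀ c : ℝ, Continuous (fun x : ℝ => Real.exp (t * (1 - x) * c) * x ^ m) := by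
    intro c; fun_prop
  -- Step 1: the inner σ-integral
  have step1 : ∀ ξ η : ℝ,
      (∫ σ in η..ξ, t ^ 2 * (1 - η) * a * Real.exp (t * (1 - σ) * a) * b *
          phiR 1 (t * (1 - η) * b) * (η * ξ) ^ m) =
        (Real.exp (t * (1 - η) * a) - Real.exp (t * (1 - ξ) * a)) *
          (Real.exp (t * (1 - η) * b) - 1) * (η * ξ) ^ m := by
    intro ξ η
    have hI : (t * a) * ∫ σ in η..ξ, Real.exp (t * (1 - σ) * a) =
        Real.exp (t * (1 - η) * a) - Real.exp (t * (1 - ξ) * a) := by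
      have := aux1 (t * a) η ξ
      have harg : ∀ σ : ℝ, t * a - σ * (t * a) = t * (1 - σ) * a := fun σ => by ring
      simpa only [harg] using this
    have hphi : (t * (1 - η) * b) * phiR 1 (t * (1 - η) * b) =
        Real.exp (t * (1 - η) * b) - 1 := aux2 _
    have hC : (∫ σ in η..ξ, t ^ 2 * (1 - η) * a * Real.exp (t * (1 - σ) * a) * b *
          phiR 1 (t * (1 - η) * b) * (η * ξ) ^ m) =
        (t ^ 2 * (1 - η) * a * b * phiR 1 (t * (1 - η) * b) * (η * ξ) ^ m) *
          ∫ σ in η..ξ, Real.exp (t * (1 - σ) * a) := by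
      rw [← intervalIntegral.integral_const_mul]
      apply intervalIntegral.integral_congr
      intro σ _
      ring
    rw [hC]
    linear_combination (η * ξ) ^ m * (t * (1 - η) * b * phiR 1 (t * (1 - η) * b)) * hI +
      (η * ξ) ^ m * (Real.exp (t * (1 - η) * a) - Real.exp (t * (1 - ξ) * a)) * hphi
  -- Step 2: the η-integral, for fixed ξ
  have step2 : ∀ ξ : ℝ,
      (∫ η in (0:ℝ)..1,
        (Real.exp (t * (1 - η) * a) - Real.exp (t * (1 - ξ) * a)) *
          (Real.exp (t * (1 - η) * b) - 1) * (η * ξ) ^ m) =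
      A (a + b) * ξ ^ m - A a * ξ ^ m
        - Real.exp (t * (1 - ξ) * a) * A b * ξ ^ m
        + Real.exp (t * (1 - ξ) * a) * (1 / (m + 1 : ℝ)) * ξ ^ m := by
    intro ξ
    set c := Real.exp (t * (1 - ξ) * a) with hc
    have hsplit : (∫ η in (0:ℝ)..1,
        (Real.exp (t * (1 - η) * a) - c) * (Real.exp (t * (1 - η) * b) - 1) * (η * ξ) ^ m) =
        ∫ η in (0:ℝ)..1,
          ((Real.exp (t * (1 - η) * (a + b)) * η ^ m) * ξ ^ m
            - (Real.exp (t * (1 - η) * a) * η ^ m) * ξ ^ m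
            - c * ((Real.exp (t * (1 - η) * b) * η ^ m) * ξ ^ m)
            + c * (η ^ m * ξ ^ m)) := by
      apply intervalIntegral.integral_congr
      intro η _
      dsimp only
      have : Real.exp (t * (1 - η) * (a + b)) =
          Real.exp (t * (1 - η) * a) * Real.exp (t * (1 - η) * b) := by
        rw [← Real.exp_add]; ring_nf
      rw [this]; ring
    rw [hsplit]
    have i1 : IntervalIntegrable (fun η : ℝ =>
        (Real.exp (t * (1 - η) * (a + b)) * η ^ m) * ξ ^ m) MeasureTheory.volume 0 1 :=
      (((hcont (a+b)).mul continuous_const)).intervalIntegrable _ _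
    have i2 : IntervalIntegrable (fun η : ℝ =>
        (Real.exp (t * (1 - η) * a) * η ^ m) * ξ ^ m) MeasureTheory.volume 0 1 :=
      (((hcont a).mul continuous_const)).intervalIntegrable _ _
    have i3 : IntervalIntegrable (fun η : ℝ =>
        c * ((Real.exp (t * (1 - η) * b) * η ^ m) * ξ ^ m)) MeasureTheory.volume 0 1 :=
      (continuous_const.mul ((hcont b).mul continuous_const)).intervalIntegrable _ _
    have i4 : IntervalIntegrable (fun η : ℝ =>
        c * (η ^ m * ξ ^ m)) MeasureTheory.volume 0 1 := by
      apply Continuous.intervalIntegrable; fun_prop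
    rw [intervalIntegral.integral_add (i1.sub i2 |>.sub i3) i4,
        intervalIntegral.integral_sub (i1.sub i2) i3,
        intervalIntegral.integral_sub i1 i2,
        intervalIntegral.integral_mul_const, intervalIntegral.integral_mul_const,
        intervalIntegral.integral_const_mul, intervalIntegral.integral_mul_const,
        intervalIntegral.integral_const_mul]
    have hpow : (∫ η in (0:ℝ)..1, η ^ m * ξ ^ m) = (1 / (m + 1 : ℝ)) * ξ ^ m := by
      rw [intervalIntegral.integral_mul_const, integral_pow]
      norm_num
    rw [hpow]
    simp only [hA]
    ring
  -- Step 3: combine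
  have hstep12 : (∫ ξ in (0:ℝ)..1, ∫ η in (0:ℝ)..1, ∫ σ in η..ξ,
        t ^ 2 * (1 - η) * a * Real.exp (t * (1 - σ) * a) * b *
          phiR 1 (t * (1 - η) * b) * (η * ξ) ^ m) =
      ∫ ξ in (0:ℝ)..1,
        (A (a + b) * ξ ^ m - A a * ξ ^ m
          - Real.exp (t * (1 - ξ) * a) * A b * ξ ^ m
          + Real.exp (t * (1 - ξ) * a) * (1 / (m + 1 : ℝ)) * ξ ^ m) := by
    apply intervalIntegral.integral_congr
    intro ξ _
    dsimp only
    rw [← step2 ξ]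
    apply intervalIntegral.integral_congr
    intro η _
    exact step1 ξ η
  rw [hstep12]
  have j1 : IntervalIntegrable (fun ξ : ℝ => A (a + b) * ξ ^ m) MeasureTheory.volume 0 1 := by
    apply Continuous.intervalIntegrable; fun_prop
  have j2 : IntervalIntegrable (fun ξ : ℝ => A a * ξ ^ m) MeasureTheory.volume 0 1 := by
    apply Continuous.intervalIntegrable; fun_prop
  have j3 : IntervalIntegrable (fun ξ : ℝ =>
      Real.exp (t * (1 - ξ) * a) * A b * ξ ^ m) MeasureTheory.volume 0 1 := by
    apply Continuous.intervalIntegrable; fun_prop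
  have j4 : IntervalIntegrable (fun ξ : ℝ =>
      Real.exp (t * (1 - ξ) * a) * (1 / (m + 1 : ℝ)) * ξ ^ m) MeasureTheory.volume 0 1 := by
    apply Continuous.intervalIntegrable; fun_prop
  rw [intervalIntegral.integral_add (j1.sub j2 |>.sub j3) j4,
      intervalIntegral.integral_sub (j1.sub j2) j3,
      intervalIntegral.integral_sub j1 j2,
      intervalIntegral.integral_const_mul, intervalIntegral.integral_const_mul]
  have e3 : (∫ ξ in (0:ℝ)..1, Real.exp (t * (1 - ξ) * a) * A b * ξ ^ m) = A a * A b := by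
    rw [show (fun ξ : ℝ => Real.exp (t * (1 - ξ) * a) * A b * ξ ^ m) =
        (fun ξ : ℝ => A b * (Real.exp (t * (1 - ξ) * a) * ξ ^ m)) from funext fun ξ => by ring,
      intervalIntegral.integral_const_mul]
    simp only [hA]; ring
  have e4 : (∫ ξ in (0:ℝ)..1, Real.exp (t * (1 - ξ) * a) * (1 / (m + 1 : ℝ)) * ξ ^ m) =
      (1 / (m + 1 : ℝ)) * A a := by
    rw [show (fun ξ : ℝ => Real.exp (t * (1 - ξ) * a) * (1 / (m + 1 : ℝ)) * ξ ^ m) =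
        (fun ξ : ℝ => (1 / (m + 1 : ℝ)) * (Real.exp (t * (1 - ξ) * a) * ξ ^ m)) from
          funext fun ξ => by ring,
      intervalIntegral.integral_const_mul]
  have epow : (∫ ξ in (0:ℝ)..1, ξ ^ m) = 1 / (m + 1 : ℝ) := by
    rw [integral_pow]; norm_num
  rw [e3, e4, epow, hphiA (a + b), hphiA a, hphiA b]
  have hm : (m ! : ℝ) ≠ 0 := Nat.cast_ne_zero.mpr (Nat.factorial_ne_zero m)
  have hm1 : (m + 1 : ℝ) ≠ 0 := by positivity
  rw [Nat.factorial_succ]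
  push_cast
  field_simp
  ring
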